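/- Suppose the prime p does not divide the order of G. If B is a commutative group and f : K → B is a group homomorphism whose kernel contains the center of K, then the kernel of f contains all of N (i.e., all elements (α, 1)); equivalently, f factors as f = g ∘ π for some homomorphism g : G → B, where π : K → G is the canonical projection (α, x) ↦ x. In particular, every abelian quotient of K/Z(K) is a quotient of G. -/

import Mathlib

open Multiplicative

/-- The shift action of `g : G` on functions `G → R`: `(g · α)(h) = α (g⁻¹h)`. -/
def regAct {G : Type*} (R : Type*) [Group G] [AddCommGroup R] (g : G) :
    (G → R) ≃+ (G → R) where
  toFun α := fun x => α (g⁻¹ * x)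
  invFun α := fun x => α (g * x)
  left_inv := by intro α; funext x; simp
  right_inv := by intro α; funext x; simp
  map_add' := by intro α β; rfl

/-- The action of `G` on the (multiplicatively written) additive group `N` of
the group algebra `𝔽_p[G]` (functions `G → R`), as a homomorphism into the
automorphism group; it is used to form the semidirect product `K = N ⋊ G`. -/
def regHom (G R : Type*) [Group G] [AddCommGroup R] :
    G →* MulAut (Multiplicative (G → R)) where
  toFun g := AddEquiv.toMultiplicative (regAct R g)
  map_one' := by
    apply MulEquiv.ext
    intro α
    apply Multiplicative.toAdd.injective
    funext x
    simp [regAct, AddEquiv.toMultiplicative]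
  map_mul' := by
    intro g h
    apply MulEquiv.ext
    intro α
    apply Multiplicative.toAdd.injective
    funext x
    simp [regAct, AddEquiv.toMultiplicative, mul_assoc]

/-- Suppose `p ∤ |G|`.  If `B` is commutative and
`f : K →* B` kills the center of `K = 𝔽_p[G] ⋊ G`, then `f` kills all of
`N = 𝔽_p[G]`, i.e. `f` factors through the projection `K → G`.  In particular
every abelian quotient of `K/Z(K)` is a quotient of `G`. -/
theorem abelian_quotients_of_group_algebra_semidirect
    {G : Type*} [Group G] [Fintype G] (p : ℕ) (hp : p.Prime)
    (hpG : ¬ p ∣ Fintype.card G)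
    (B : Type*) [CommGroup B]
    (f : (Multiplicative (G → ZMod p) ⋊[regHom G (ZMod p)] G) →* B)
    (hf : Subgroup.center (Multiplicative (G → ZMod p) ⋊[regHom G (ZMod p)] G) ≤ f.ker) :
    (∀ α : G → ZMod p,
      f (⟨ofAdd α, (1 : G)⟩ : Multiplicative (G → ZMod p) ⋊[regHom G (ZMod p)] G) = 1) ∧
    ∃ g : G →* B, f = g.comp SemidirectProduct.rightHom := by
  classical
  -- constant functions are central
  have hconst : ∀ c : ZMod p,
      (⟨ofAdd (Function.const G c), 1⟩ :
          Multiplicative (G → ZMod p) ⋊[regHom G (ZMod p)] G) ∈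
        Subgroup.center (Multiplicative (G → ZMod p) ⋊[regHom G (ZMod p)] G) := by
    intro c
    rw [Subgroup.mem_center_iff]
    intro k
    ext : 1
    · show k.left * regHom G (ZMod p) k.right (ofAdd (Function.const G c)) =
        ofAdd (Function.const G c) * regHom G (ZMod p) (1 : G) k.left
      rw [map_one]
      have : regHom G (ZMod p) k.right (ofAdd (Function.const G c)) =
          ofAdd (Function.const G c) := rfl
      rw [this, mul_comm]
      rfl
    · show k.right * 1 = 1 * k.right
      rw [mul_one, one_mul]
  -- multiplicativity on N
  have hmul : ∀ α β : G → ZMod p,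
      f (⟨ofAdd (α + β), 1⟩ : Multiplicative (G → ZMod p) ⋊[regHom G (ZMod p)] G) =
        f ⟨ofAdd α, 1⟩ * f ⟨ofAdd β, 1⟩ := by
    intro α β
    rw [← map_mul]
    congr 1
    ext : 1
    · show ofAdd (α + β) = ofAdd α * regHom G (ZMod p) (1 : G) (ofAdd β)
      rw [map_one]
      rfl
    · show (1 : G) = 1 * 1
      rw [mul_one]
  -- the additive version of f restricted to N
  let F : (G → ZMod p) →+ Additive B :=
    { toFun := fun α => Additive.ofMul (f ⟨ofAdd α, 1⟩)
      map_zero' := by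
        have : (⟨ofAdd (0 : G → ZMod p), 1⟩ :
            Multiplicative (G → ZMod p) ⋊[regHom G (ZMod p)] G) = 1 := rfl
        simp [this]
      map_add' := by intro α β; simp [hmul] }
  -- shift invariance
  have hshift : ∀ (g : G) (α : G → ZMod p), F (fun x => α (g⁻¹ * x)) = F α := by
    intro g α
    have key : (⟨ofAdd (fun x => α (g⁻¹ * x)), 1⟩ :
          Multiplicative (G → ZMod p) ⋊[regHom G (ZMod p)] G) =
        SemidirectProduct.inr g * ⟨ofAdd α, 1⟩ * (SemidirectProduct.inr g)⁻¹ := by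
      ext : 1
      · show ofAdd (fun x => α (g⁻¹ * x)) =
          ((SemidirectProduct.inr g * (⟨ofAdd α, 1⟩ :
              Multiplicative (G → ZMod p) ⋊[regHom G (ZMod p)] G)) *
            (SemidirectProduct.inr g)⁻¹).left
        rw [← map_inv, SemidirectProduct.mul_left, SemidirectProduct.mul_left]
        simp only [SemidirectProduct.left_inr, one_mul, SemidirectProduct.right_inr, map_one,
          mul_one]
        rfl
      · show (1 : G) =
          ((SemidirectProduct.inr g * (⟨ofAdd α, 1⟩ :
              Multiplicative (G → ZMod p) ⋊[regHom G (ZMod p)] G)) *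
            (SemidirectProduct.inr g)⁻¹).right
        rw [← map_inv, SemidirectProduct.mul_right, SemidirectProduct.mul_right]
        simp
    have hb : f (⟨ofAdd (fun x => α (g⁻¹ * x)), 1⟩ :
          Multiplicative (G → ZMod p) ⋊[regHom G (ZMod p)] G) = f ⟨ofAdd α, 1⟩ := by
      rw [key, map_mul, map_mul, map_inv,
        mul_comm (f (SemidirectProduct.inr g)) (f ⟨ofAdd α, 1⟩), mul_inv_cancel_right]
    exact congrArg Additive.ofMul hb
  have hN : ∀ α : G → ZMod p,
      f (⟨ofAdd α, (1 : G)⟩ : Multiplicative (G → ZMod p) ⋊[regHom G (ZMod p)] G) = 1 := by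
    intro α
    have hp1 : p • F α = 0 := by
      rw [← map_nsmul]
      have : p • α = 0 := by
        funext x
        show p • α x = 0
        rw [nsmul_eq_mul, ZMod.natCast_self, zero_mul]
      rw [this, map_zero]
    have hn1 : Fintype.card G • F α = 0 := by
      have hsum : (∑ g : G, fun x => α (g⁻¹ * x)) = Function.const G (∑ x : G, α x) := by
        funext x
        rw [Finset.sum_apply]
        exact Fintype.sum_equiv ((Equiv.inv G).trans (Equiv.mulRight x)) _ _ (fun g => rfl)
      have hF : F (∑ g : G, fun x => α (g⁻¹ * x)) = Fintype.card G • F α := by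
        rw [map_sum]
        rw [Finset.sum_congr rfl (fun g _ => hshift g α)]
        simp [Finset.card_univ]
      rw [hsum] at hF
      rw [← hF]
      have hker := hf (hconst (∑ x : G, α x))
      rw [MonoidHom.mem_ker] at hker
      show Additive.ofMul (f _) = 0
      rw [hker]
      rfl
    have hco : Nat.Coprime p (Fintype.card G) := (Nat.Prime.coprime_iff_not_dvd hp).mpr hpG
    have hord : addOrderOf (F α) ∣ Nat.gcd p (Fintype.card G) :=
      Nat.dvd_gcd (addOrderOf_dvd_of_nsmul_eq_zero hp1) (addOrderOf_dvd_of_nsmul_eq_zero hn1)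
    rw [hco] at hord
    have h0 : F α = 0 := AddMonoid.addOrderOf_eq_one_iff.mp (Nat.dvd_one.mp hord)
    exact h0
  refine ⟨hN, ⟨f.comp SemidirectProduct.inr, ?_⟩⟩
  ext k
  rw [← SemidirectProduct.inl_left_mul_inr_right k, map_mul]
  have h1 : f (SemidirectProduct.inl k.left) = 1 := by
    have he : SemidirectProduct.inl k.left =
        (⟨ofAdd (Multiplicative.toAdd k.left), 1⟩ :
          Multiplicative (G → ZMod p) ⋊[regHom G (ZMod p)] G) := by
      ext <;> rfl
    rw [he, hN]
  rw [map_mul, h1, one_mul]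
  simp [MonoidHom.comp_apply]
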